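/- Let n ∈ ℕ, let G be a finite group, and let ρ : G → (EuclideanSpace ℝ (Fin n) ≃ₗᵢ[ℝ] EuclideanSpace ℝ (Fin n)) be a group homomorphism into the group of linear isometries. Call a polynomial p ∈ MvPolynomial (Fin n) ℝ anti-invariant if for every g ∈ G the polynomial obtained by the linear change of variables ρ(g) equals det(ρ(g)) · p. Suppose p is a nonzero anti-invariant polynomial such that every nonzero anti-invariant polynomial has total degree ≥ the total degree of p. Then Δp = 0, where Δ is the polynomial Laplacian Δp = ∑_i ∂ᵢ(∂ᵢ p). -/

import Mathlib

open MvPolynomial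

private lemma totalDegree_pderiv_le' {n : ℕ} (i : Fin n) (q : MvPolynomial (Fin n) ℝ) :
    (pderiv i q).totalDegree ≤ q.totalDegree - 1 := by
  conv_lhs => rw [q.as_sum, map_sum]
  refine (totalDegree_finset_sum _ _).trans (Finset.sup_le fun s hs => ?_)
  rw [pderiv_monomial]
  by_cases hsi : s i = 0
  · simp [hsi]
  · refine (totalDegree_monomial_le _ _).trans ?_
    have h1 : (s - Finsupp.single i 1) + Finsupp.single i 1 = s :=
      tsub_add_cancel_of_le (Finsupp.single_le_iff.mpr (Nat.one_le_iff_ne_zero.mpr hsi))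
    have h2 : s.sum (fun _ e => e) ≤ q.totalDegree := le_totalDegree hs
    have h3 : (s - Finsupp.single i 1).sum (fun _ e => e) + 1 = s.sum (fun _ e => e) := by
      conv_rhs => rw [← h1]
      rw [Finsupp.sum_add_index' (fun _ => rfl) (fun _ _ _ => rfl),
        Finsupp.sum_single_index rfl]
    have h4 : ((s - Finsupp.single i 1).sum fun _ => id) =
        (s - Finsupp.single i 1).sum (fun _ e => e) := rfl
    omega

private lemma chain_rule {n : ℕ} (B : Fin n → Fin n → ℝ) (q : MvPolynomial (Fin n) ℝ)
    (k : Fin n) :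
    pderiv k (aeval (fun i : Fin n => ∑ j : Fin n, C (B i j) * X j) q) =
      ∑ i : Fin n, C (B i k) *
        aeval (fun i : Fin n => ∑ j : Fin n, C (B i j) * X j) (pderiv i q) := by
  have hfd : ∀ j, pderiv k (∑ j' : Fin n, C (B j j') * X j') = C (B j k) := by
    intro j
    rw [map_sum]
    simp only [pderiv_C_mul]
    rw [Finset.sum_eq_single k]
    · simp
    · intro b _ hb; simp [pderiv_X_of_ne hb]
    · simp
  induction q using MvPolynomial.induction_on with
  | C a => simp
  | add p q hp hq =>
    simp only [map_add, mul_add, Finset.sum_add_distrib, hp, hq]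
  | mul_X p j hp =>
    simp only [map_mul, aeval_X, pderiv_mul, hp, hfd, map_add, pderiv_X]
    rw [Finset.sum_mul]
    simp [pderiv_mul, map_add, map_mul, aeval_X, mul_add, Finset.sum_add_distrib,
      Pi.single_apply, mul_ite, mul_comm, mul_left_comm, Finset.mul_sum]

/-- If `p` is a nonzero polynomial which is anti-invariant under a finite group of linear
isometries of `ℝⁿ` (i.e. the change of variables by `ρ g` multiplies `p` by `det (ρ g)`),
of minimal total degree among nonzero anti-invariant polynomials, then `Δ p = 0`. -/
theorem laplacian_of_minimal_antiinvariant
    (n : ℕ) (G : Type*) [Group G] [Finite G]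
    (ρ : G →* (EuclideanSpace ℝ (Fin n) ≃ₗᵢ[ℝ] EuclideanSpace ℝ (Fin n)))
    (AntiInvariant : MvPolynomial (Fin n) ℝ → Prop)
    (hAntiInvariant : ∀ q : MvPolynomial (Fin n) ℝ, AntiInvariant q ↔ ∀ g : G,
      aeval (fun i : Fin n => ∑ j : Fin n,
          C ((ρ g) (EuclideanSpace.single j (1 : ℝ)) i) * X j) q
        = C (LinearMap.det ((ρ g).toLinearEquiv.toLinearMap)) * q)
    (p : MvPolynomial (Fin n) ℝ) (hp0 : p ≠ 0) (hpA : AntiInvariant p)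
    (hmin : ∀ q : MvPolynomial (Fin n) ℝ, q ≠ 0 → AntiInvariant q →
      p.totalDegree ≤ q.totalDegree) :
    ∑ i : Fin n, pderiv i (pderiv i p) = 0 := by
  classical
  by_contra hΔ
  set Δp : MvPolynomial (Fin n) ℝ := ∑ i : Fin n, pderiv i (pderiv i p) with hΔp
  -- `Δp` is anti-invariant
  have hA : AntiInvariant Δp := by
    rw [hAntiInvariant]
    intro g
    set B : Fin n → Fin n → ℝ :=
      fun i j => (ρ g) (EuclideanSpace.single j (1 : ℝ)) i with hB
    set d : ℝ := LinearMap.det ((ρ g).toLinearEquiv.toLinearMap) with hd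
    -- orthogonality of the matrix `B`
    have horth : ∀ i l : Fin n, (∑ k : Fin n, B i k * B l k) = if i = l then 1 else 0 := by
      have h1 : (Matrix.of B).transpose * Matrix.of B = 1 := by
        ext j k
        have h := LinearIsometryEquiv.inner_map_map (𝕜 := ℝ) (ρ g)
          (EuclideanSpace.single j (1 : ℝ)) (EuclideanSpace.single k (1 : ℝ))
        rw [PiLp.inner_apply, EuclideanSpace.inner_single_left] at h
        simpa [Matrix.mul_apply, Matrix.one_apply, hB, EuclideanSpace.single_apply,
          eq_comm, mul_comm] using h
      have h2 : Matrix.of B * (Matrix.of B).transpose = 1 := mul_eq_one_comm.mp h1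
      intro i l
      have h3 := congrFun (congrFun h2 i) l
      simpa [Matrix.mul_apply, Matrix.one_apply] using h3
    set T : MvPolynomial (Fin n) ℝ →ₐ[ℝ] MvPolynomial (Fin n) ℝ :=
      aeval (fun i : Fin n => ∑ j : Fin n, C (B i j) * X j) with hT
    -- the Laplacian commutes with the change of variables `T`
    have key : ∀ q : MvPolynomial (Fin n) ℝ,
        (∑ k : Fin n, pderiv k (pderiv k (T q))) = T (∑ i : Fin n, pderiv i (pderiv i q)) := by
      intro q
      have step : ∀ k : Fin n, pderiv k (pderiv k (T q)) =
          ∑ i : Fin n, ∑ l : Fin n, C (B i k * B l k) * T (pderiv l (pderiv i q)) := by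
        intro k
        rw [hT, chain_rule, map_sum]
        refine Finset.sum_congr rfl fun i _ => ?_
        rw [pderiv_C_mul, chain_rule, Finset.mul_sum]
        refine Finset.sum_congr rfl fun l _ => ?_
        rw [map_mul, mul_assoc]
      calc (∑ k : Fin n, pderiv k (pderiv k (T q)))
          = ∑ k : Fin n, ∑ i : Fin n, ∑ l : Fin n,
              C (B i k * B l k) * T (pderiv l (pderiv i q)) :=
            Finset.sum_congr rfl fun k _ => step k
        _ = ∑ i : Fin n, ∑ l : Fin n,
              C (∑ k : Fin n, B i k * B l k) * T (pderiv l (pderiv i q)) := by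
            rw [Finset.sum_comm]
            refine Finset.sum_congr rfl fun i _ => ?_
            rw [Finset.sum_comm]
            refine Finset.sum_congr rfl fun l _ => ?_
            rw [map_sum, Finset.sum_mul]
        _ = ∑ i : Fin n, T (pderiv i (pderiv i q)) := by
            refine Finset.sum_congr rfl fun i _ => ?_
            simp [horth, apply_ite (C : ℝ → MvPolynomial (Fin n) ℝ)]
        _ = T (∑ i : Fin n, pderiv i (pderiv i q)) := (map_sum T _ _).symm
    have hpg : T p = C d * p := (hAntiInvariant p).mp hpA g
    show T Δp = C d * Δp
    rw [hΔp, ← key p, hpg]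
    simp [pderiv_C_mul, Finset.mul_sum]
  -- degree contradiction
  have hdp : p.totalDegree ≠ 0 := by
    intro h
    apply hΔ
    refine Finset.sum_eq_zero fun i _ => ?_
    have hzero : pderiv i p = 0 := by
      conv_lhs => rw [p.as_sum, map_sum]
      refine Finset.sum_eq_zero fun s hs => ?_
      rw [pderiv_monomial, (totalDegree_eq_zero_iff _ p).mp h s hs i]
      simp
    rw [hzero, map_zero]
  have hdeg : Δp.totalDegree ≤ p.totalDegree - 1 := by
    refine (totalDegree_finset_sum _ _).trans (Finset.sup_le fun i _ => ?_)
    have h1 := totalDegree_pderiv_le' i (pderiv i p)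
    have h2 := totalDegree_pderiv_le' i p
    omega
  have := hmin Δp hΔ hA
  omega
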